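/- arXiv:1511.03693 — 2 statements merged into one kernel-verified Lean document; each statement's English description precedes it below -/
import Mathlib

section
/- Let T :⊆ X ⇉ Y and S :⊆ Y ⇉ Z be partial multivalued functions between represented spaces which are both cylinders, and suppose T is transparent. Then S ∘ T is a cylinder. -/
open Filter Topology

/-! ### Partial functions on Baire space -/

/-- A partial function on Baire space, given by a domain and an underlying total
function (whose values outside the domain are irrelevant). -/
structure PFunB where
  dom : Set (ℕ → ℕ)
  toFun : (ℕ → ℕ) → (ℕ → ℕ)

/-- A partial function on Baire space is continuous if its underlying function is
continuous on its domain. -/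
def PFunB.IsContinuous (F : PFunB) : Prop := ContinuousOn F.toFun F.dom

/-- Composition of partial functions on Baire space. -/
def PFunB.comp (F G : PFunB) : PFunB where
  dom := {p | p ∈ G.dom ∧ G.toFun p ∈ F.dom}
  toFun := fun p => F.toFun (G.toFun p)

/-- A partial function from (Baire space) × (Baire space) to Baire space. -/
structure PFunB2 where
  dom : Set ((ℕ → ℕ) × (ℕ → ℕ))
  toFun : (ℕ → ℕ) × (ℕ → ℕ) → (ℕ → ℕ)

def PFunB2.IsContinuous (K : PFunB2) : Prop := ContinuousOn K.toFun K.dom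

/-! ### Coding of sequences -/

/-- The `n`-th column of `p : ℕ → ℕ`, via the standard pairing bijection. -/
def col (p : ℕ → ℕ) (n : ℕ) : ℕ → ℕ := fun k => p (Nat.pair n k)

/-- Interleaving pairing of two elements of Baire space. -/
def pairB (p q : ℕ → ℕ) : ℕ → ℕ := fun n => if n % 2 = 0 then p (n / 2) else q (n / 2)

def leftB (r : ℕ → ℕ) : ℕ → ℕ := fun n => r (2 * n)

def rightB (r : ℕ → ℕ) : ℕ → ℕ := fun n => r (2 * n + 1)

theorem leftB_pairB (p q : ℕ → ℕ) : leftB (pairB p q) = p := by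
  funext n
  show (if (2 * n) % 2 = 0 then p ((2 * n) / 2) else q ((2 * n) / 2)) = p n
  rw [if_pos (by omega)]
  congr 1
  omega

theorem rightB_pairB (p q : ℕ → ℕ) : rightB (pairB p q) = q := by
  funext n
  show (if (2 * n + 1) % 2 = 0 then p ((2 * n + 1) / 2) else q ((2 * n + 1) / 2)) = q n
  rw [if_neg (by omega)]
  congr 1
  omega

/-! ### Represented spaces -/

/-- A represented space: a set `X` together with a partial surjection from Baire space
onto `X` (modelled as a total map together with a domain, such that every point has a
name in the domain). -/
structure RepSpace (X : Type u) where
  dom : Set (ℕ → ℕ)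
  map : (ℕ → ℕ) → X
  surj : ∀ x : X, ∃ p ∈ dom, map p = x

/-- Baire space with the identity representation. -/
def idRep : RepSpace (ℕ → ℕ) := ⟨Set.univ, id, fun x => ⟨x, trivial, rfl⟩⟩

/-- The representation of `X`, viewed as a partial multivalued function from Baire
space to `X` (with empty value outside the domain). -/
def RepSpace.toMV {X : Type u} (δ : RepSpace X) : (ℕ → ℕ) → Set X :=
  fun p => {x | p ∈ δ.dom ∧ δ.map p = x}

/-- Product of represented spaces, via the interleaving pairing homeomorphism. -/
def RepSpace.prod {X : Type u} {Y : Type v} (δX : RepSpace X) (δY : RepSpace Y) :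
    RepSpace (X × Y) where
  dom := {r | leftB r ∈ δX.dom ∧ rightB r ∈ δY.dom}
  map := fun r => (δX.map (leftB r), δY.map (rightB r))
  surj := by
    rintro ⟨x, y⟩
    obtain ⟨p, hp, hpx⟩ := δX.surj x
    obtain ⟨q, hq, hqy⟩ := δY.surj y
    refine ⟨pairB p q, ⟨?_, ?_⟩, ?_⟩
    · rw [leftB_pairB]; exact hp
    · rw [rightB_pairB]; exact hq
    · show (δX.map (leftB (pairB p q)), δY.map (rightB (pairB p q))) = (x, y)
      rw [leftB_pairB, rightB_pairB, hpx, hqy]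

/-- The represented space of sequences in `X`: `δ(p) = (δ_X((p)_n))_n`. -/
def RepSpace.seq {X : Type u} (δ : RepSpace X) : RepSpace (ℕ → X) where
  dom := {p | ∀ n, col p n ∈ δ.dom}
  map := fun p n => δ.map (col p n)
  surj := by
    intro x
    choose q hq hmap using fun n => δ.surj (x n)
    have hcol : ∀ n, col (fun m => q (Nat.unpair m).1 (Nat.unpair m).2) n = q n := by
      intro n; funext k; simp [col]
    refine ⟨fun m => q (Nat.unpair m).1 (Nat.unpair m).2, fun n => ?_, ?_⟩
    · rw [hcol]; exact hq n
    · funext n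
      show δ.map (col (fun m => q (Nat.unpair m).1 (Nat.unpair m).2) n) = x n
      rw [hcol]; exact hmap n

/-! ### Partial multivalued functions -/

/-- Composition of partial multivalued functions (with the domain convention
`dom (f ∘ g) = {x ∈ dom g : g x ⊆ dom f}`; a partial multivalued function is modelled
as a `Set`-valued function whose domain is the set of points with nonempty value). -/
def MComp {X : Type u} {Y : Type v} {Z : Type w} (f : Y → Set Z) (g : X → Set Y) :
    X → Set Z :=
  fun x => {z | (∀ y ∈ g x, (f y).Nonempty) ∧ ∃ y ∈ g x, z ∈ f y}

/-- `f` tightens `g`: `dom g ⊆ dom f` and `f x ⊆ g x` for every `x ∈ dom g`. -/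
def Tightens {X : Type u} {Y : Type v} (f g : X → Set Y) : Prop :=
  ∀ x, (g x).Nonempty → (f x).Nonempty ∧ f x ⊆ g x

/-- `F` is a realizer of the partial multivalued function `f`. -/
def Realizes {X : Type u} {Y : Type v} (δX : RepSpace X) (δY : RepSpace Y)
    (F : PFunB) (f : X → Set Y) : Prop :=
  ∀ p ∈ δX.dom, (f (δX.map p)).Nonempty →
    p ∈ F.dom ∧ F.toFun p ∈ δY.dom ∧ δY.map (F.toFun p) ∈ f (δX.map p)

/-- A partial multivalued function between represented spaces is continuous if it has a
continuous realizer. -/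
def MCts {X : Type u} {Y : Type v} (δX : RepSpace X) (δY : RepSpace Y)
    (f : X → Set Y) : Prop :=
  ∃ F : PFunB, F.IsContinuous ∧ Realizes δX δY F f

/-- Strong continuous Weihrauch reducibility `f ≤_sW^c g`. -/
def StrongWc {A : Type u} {B : Type v} {C : Type w} {D : Type x}
    (δA : RepSpace A) (δB : RepSpace B) (δC : RepSpace C) (δD : RepSpace D)
    (f : A → Set B) (g : C → Set D) : Prop :=
  ∃ K H : PFunB, K.IsContinuous ∧ H.IsContinuous ∧
    ∀ G : PFunB, Realizes δC δD G g → Realizes δA δB (K.comp (G.comp H)) f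

/-- Continuous Weihrauch reducibility `f ≤_W^c g`. -/
def Wc {A : Type u} {B : Type v} {C : Type w} {D : Type x}
    (δA : RepSpace A) (δB : RepSpace B) (δC : RepSpace C) (δD : RepSpace D)
    (f : A → Set B) (g : C → Set D) : Prop :=
  ∃ (K : PFunB2) (H : PFunB), K.IsContinuous ∧ H.IsContinuous ∧
    ∀ G : PFunB, Realizes δC δD G g →
      Realizes δA δB
        ⟨{p | p ∈ H.dom ∧ H.toFun p ∈ G.dom ∧ (p, G.toFun (H.toFun p)) ∈ K.dom},
          fun p => K.toFun (p, G.toFun (H.toFun p))⟩ f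

/-- Continuous Weihrauch equivalence `f ≡_W^c g`. -/
def WcEquiv {A : Type u} {B : Type v} {C : Type w} {D : Type x}
    (δA : RepSpace A) (δB : RepSpace B) (δC : RepSpace C) (δD : RepSpace D)
    (f : A → Set B) (g : C → Set D) : Prop :=
  Wc δA δB δC δD f g ∧ Wc δC δD δA δB g f

/-- `id_{ℕ^ℕ} × g` for a partial multivalued `g`. -/
def idProd {C : Type u} {D : Type v} (g : C → Set D) :
    (ℕ → ℕ) × C → Set ((ℕ → ℕ) × D) :=
  fun pc => {qd | qd.1 = pc.1 ∧ qd.2 ∈ g pc.2}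

/-- `f` is a cylinder if `id_{ℕ^ℕ} × f ≤_sW^c f`. -/
def IsCylinder {X : Type u} {Y : Type v} (δX : RepSpace X) (δY : RepSpace Y)
    (f : X → Set Y) : Prop :=
  StrongWc (idRep.prod δX) (idRep.prod δY) δX δY (idProd f) f

/-- `T :⊆ X ⇉ Y` is transparent: for every continuous `g :⊆ Y ⇉ Y` there is a
continuous `f :⊆ X ⇉ X` with `T ∘ f ⪯ g ∘ T`. -/
def Transparent {X : Type u} {Y : Type v} (δX : RepSpace X) (δY : RepSpace Y)
    (T : X → Set Y) : Prop :=
  ∀ g : Y → Set Y, MCts δY δY g →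
    ∃ f : X → Set X, MCts δX δX f ∧ Tightens (MComp T f) (MComp g T)

/-- `ζ :⊆ Y ⇉ ℕ^ℕ` is a probe for `Y`: it is continuous, and for every continuous
`f :⊆ Y ⇉ ℕ^ℕ` there is a continuous `e :⊆ Y ⇉ Y` with `ζ ∘ e ⪯ f`. -/
def IsProbe {Y : Type u} (δY : RepSpace Y) (ζ : Y → Set (ℕ → ℕ)) : Prop :=
  MCts δY idRep ζ ∧
    ∀ f : Y → Set (ℕ → ℕ), MCts δY idRep f →
      ∃ e : Y → Set Y, MCts δY δY e ∧ Tightens (MComp ζ e) f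

/-- Parallelization of a partial multivalued function. -/
def Parallel {X : Type u} {Y : Type v} (f : X → Set Y) : (ℕ → X) → Set (ℕ → Y) :=
  fun xs => {ys | ∀ n, ys n ∈ f (xs n)}

/-! ### Games -/

/-- A strategy for player II: to each finite sequence of I's moves it assigns a natural
number or a pass (`none`). -/
abbrev Strategy := List ℕ → Option ℕ

/-- The move of player II (following `σ`) after I has played `x 0, …, x n`. -/
def respond (σ : Strategy) (x : ℕ → ℕ) (n : ℕ) : Option ℕ :=
  σ (List.ofFn fun i : Fin (n + 1) => x i)

/-- Player II plays natural numbers at infinitely many rounds of the run against `x`. -/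
def InfPlays (σ : Strategy) (x : ℕ → ℕ) : Prop :=
  {n | (respond σ x n).isSome = true}.Infinite

/-- The element of Baire space built by player II in the run against `x`
(the subsequence of her non-pass moves). -/
noncomputable def output (σ : Strategy) (x : ℕ → ℕ) : ℕ → ℕ :=
  fun k => (respond σ x (Nat.nth (fun n => (respond σ x n).isSome = true) k)).getD 0

/-- The partial multivalued function `δ_B ∘ ζ ∘ T ∘ δ_X :⊆ ℕ^ℕ ⇉ B` used in the winning
condition of the `(ζ, T)`-Wadge game. -/
def GameMap {X : Type u} {Y : Type v} {B : Type w} (δX : RepSpace X) (δB : RepSpace B)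
    (ζ : Y → Set (ℕ → ℕ)) (T : X → Set Y) : (ℕ → ℕ) → Set B :=
  MComp δB.toMV (MComp ζ (MComp T δX.toMV))

/-- `σ` is a winning strategy for player II in the `(ζ, T)`-Wadge game for `f`:
for every run `x` built by player I with `x ∈ dom (f ∘ δ_A)`, player II plays natural
numbers infinitely often, her output `y` lies in `dom (δ_B ∘ ζ ∘ T ∘ δ_X)`, and
`(δ_B ∘ ζ ∘ T ∘ δ_X)(y) ⊆ (f ∘ δ_A)(x)` (runs with `x ∉ dom (f ∘ δ_A)` are won by II
automatically). -/
def WadgeWinning {X : Type u} {Y : Type v} {A : Type w} {B : Type x}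
    (δX : RepSpace X) (δA : RepSpace A) (δB : RepSpace B)
    (ζ : Y → Set (ℕ → ℕ)) (T : X → Set Y) (f : A → Set B) (σ : Strategy) : Prop :=
  ∀ x : ℕ → ℕ, (MComp f δA.toMV x).Nonempty →
    InfPlays σ x ∧
    (GameMap δX δB ζ T (output σ x)).Nonempty ∧
    GameMap δX δB ζ T (output σ x) ⊆ MComp f δA.toMV x

/-! ### lim, isFinite and the Baire hierarchy -/

/-- The partial function `lim :⊆ ℕ^ℕ → ℕ^ℕ`, `lim(p) = lim_n (p)_n` (pointwise limit),
viewed as a partial multivalued function with singleton values on its domain. -/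
def limFn : (ℕ → ℕ) → Set (ℕ → ℕ) :=
  fun p => {q | ∀ k, ∀ᶠ n in atTop, col p n k = q k}

/-- The space `{0,1}^ℕ` of binary sequences. -/
abbrev BSeq : Type := {p : ℕ → ℕ // ∀ n, p n ≤ 1}

/-- `{0,1}^ℕ` with the identity representation (as a subspace of Baire space). -/
def repBSeq : RepSpace BSeq where
  dom := {p | ∀ n, p n ≤ 1}
  map := fun p => ⟨fun n => min (p n) 1, fun _ => min_le_right _ _⟩
  surj := fun x => ⟨x.1, x.2, Subtype.ext (funext fun n => min_eq_left (x.2 n))⟩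

/-- The two-point space `{0,1}`. -/
abbrev TwoPt : Type := {n : ℕ // n ≤ 1}

/-- The two-point space `{0,1}` represented by `δ(p) = p 0`. -/
def repTwo : RepSpace TwoPt where
  dom := {p | p 0 ≤ 1}
  map := fun p => ⟨min (p 0) 1, min_le_right _ _⟩
  surj := fun x => ⟨fun _ => x.1, x.2, Subtype.ext (min_eq_left x.2)⟩

open Classical in
/-- `isFinite(p) = 1` iff `{n : p n = 1}` is finite. -/
noncomputable def isFinite : BSeq → TwoPt :=
  fun p => if {n | p.1 n = 1}.Finite then ⟨1, le_refl 1⟩ else ⟨0, Nat.zero_le 1⟩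

/-- The finite levels of the Baire hierarchy: Baire class 0 functions are the continuous
ones, and Baire class `n+1` functions are pointwise limits of sequences of Baire class
`n` functions. -/
def BaireClass : ℕ → ((ℕ → ℕ) → (ℕ → ℕ)) → Prop
  | 0, f => Continuous f
  | n + 1, f => ∃ g : ℕ → (ℕ → ℕ) → (ℕ → ℕ),
      (∀ k, BaireClass n (g k)) ∧ ∀ x, Tendsto (fun k => g k x) atTop (𝓝 (f x))

/-- Composition of continuous partial functions on Baire space is continuous. -/
theorem PFunB.comp_isContinuous {F G : PFunB} (hF : F.IsContinuous) (hG : G.IsContinuous) :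
    (F.comp G).IsContinuous := by
  have hsub : (F.comp G).dom ⊆ G.dom := fun p hp => hp.1
  exact hF.comp (hG.mono hsub) (fun p hp => hp.2)

/-- Key extraction lemma: from a strong continuous Weihrauch reduction witnessing that
`T` is a cylinder, with witnesses `H, K`, we extract: for any name `r₀` of a pair
`(p, x)` with `T x` nonempty, `H r₀` is a name of a point `x₁` in the domain of `T`,
and `K` decodes every name of every element of `T x₁` into a pair `(p, y)` with
`y ∈ T x`. This is proved by playing adversarial realizers of `T` against the
reduction. -/
theorem cylinder_extract {C : Type u} {D : Type v}
    (δC : RepSpace C) (δD : RepSpace D) (T : C → Set D) (H K : PFunB)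
    (hw : ∀ G : PFunB, Realizes δC δD G T →
      Realizes (idRep.prod δC) (idRep.prod δD) (K.comp (G.comp H)) (idProd T))
    (r₀ : ℕ → ℕ) (hr : rightB r₀ ∈ δC.dom)
    (hne : (T (δC.map (rightB r₀))).Nonempty) :
    r₀ ∈ H.dom ∧ H.toFun r₀ ∈ δC.dom ∧ (T (δC.map (H.toFun r₀))).Nonempty ∧
      ∀ s, s ∈ δD.dom → δD.map s ∈ T (δC.map (H.toFun r₀)) →
        s ∈ K.dom ∧ rightB (K.toFun s) ∈ δD.dom ∧ leftB (K.toFun s) = leftB r₀ ∧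
        δD.map (rightB (K.toFun s)) ∈ T (δC.map (rightB r₀)) := by
  classical
  have hc : ∀ r' : ℕ → ℕ, r' ∈ δC.dom ∧ (T (δC.map r')).Nonempty →
      ∃ s, s ∈ δD.dom ∧ δD.map s ∈ T (δC.map r') := by
    rintro r' ⟨-, y, hy⟩
    obtain ⟨s, hs, hmap⟩ := δD.surj y
    exact ⟨s, hs, hmap ▸ hy⟩
  set Dom : Set (ℕ → ℕ) := {r' | r' ∈ δC.dom ∧ (T (δC.map r')).Nonempty} with hDom
  set base : (ℕ → ℕ) → (ℕ → ℕ) :=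
    fun r' => if h : r' ∈ Dom then (hc r' h).choose else r' with hbase
  have hbase_dom : ∀ q, q ∈ Dom → base q ∈ δD.dom ∧ δD.map (base q) ∈ T (δC.map q) := by
    intro q hq
    have : base q = (hc q hq).choose := dif_pos hq
    rw [this]
    exact (hc q hq).choose_spec
  have hr₀mem : r₀ ∈ (idRep.prod δC).dom := ⟨trivial, hr⟩
  have hvne : (idProd T ((idRep.prod δC).map r₀)).Nonempty := by
    obtain ⟨y, hy⟩ := hne
    exact ⟨(leftB r₀, y), rfl, hy⟩
  -- base adversary: forces `H r₀` into the domain of every realizer of `T`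
  have hG₀ : Realizes δC δD ⟨Dom, base⟩ T := by
    intro q hq hq'
    exact ⟨⟨hq, hq'⟩, (hbase_dom q ⟨hq, hq'⟩).1, (hbase_dom q ⟨hq, hq'⟩).2⟩
  obtain ⟨hdom₀, -, -⟩ := hw ⟨Dom, base⟩ hG₀ r₀ hr₀mem hvne
  obtain ⟨⟨hHdom, hG₀dom⟩, -⟩ := hdom₀
  refine ⟨hHdom, hG₀dom.1, hG₀dom.2, ?_⟩
  intro s hs hsmem
  -- adversary answering `s` at `H r₀`
  have hG₁ : Realizes δC δD ⟨Dom, Function.update base (H.toFun r₀) s⟩ T := by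
    intro q hq hq'
    by_cases he : q = H.toFun r₀
    · refine ⟨⟨hq, hq'⟩, ?_, ?_⟩
      · show Function.update base (H.toFun r₀) s q ∈ δD.dom
        rw [he, Function.update_self]; exact hs
      · show δD.map (Function.update base (H.toFun r₀) s q) ∈ T (δC.map q)
        rw [he, Function.update_self]; exact hsmem
    · refine ⟨⟨hq, hq'⟩, ?_, ?_⟩
      · show Function.update base (H.toFun r₀) s q ∈ δD.dom
        rw [Function.update_of_ne he]; exact (hbase_dom q ⟨hq, hq'⟩).1
      · show δD.map (Function.update base (H.toFun r₀) s q) ∈ T (δC.map q)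
        rw [Function.update_of_ne he]; exact (hbase_dom q ⟨hq, hq'⟩).2
  obtain ⟨hdom₁, hcod, hval⟩ :=
    hw ⟨Dom, Function.update base (H.toFun r₀) s⟩ hG₁ r₀ hr₀mem hvne
  have hGs : (PFunB.mk Dom (Function.update base (H.toFun r₀) s)).toFun (H.toFun r₀) = s := by
    show Function.update base (H.toFun r₀) s (H.toFun r₀) = s
    exact Function.update_self _ _ _
  obtain ⟨-, hKin⟩ := hdom₁
  have hKin' : (PFunB.comp (PFunB.mk Dom (Function.update base (H.toFun r₀) s)) H).toFun r₀ = s := hGs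
  rw [hKin'] at hKin
  have hcod' : K.toFun s ∈ (idRep.prod δD).dom := by
    have : (K.comp ((PFunB.mk Dom (Function.update base (H.toFun r₀) s)).comp H)).toFun r₀
        = K.toFun s := by
      show K.toFun ((PFunB.mk Dom (Function.update base (H.toFun r₀) s)).toFun (H.toFun r₀))
          = K.toFun s
      rw [hGs]
    rwa [this] at hcod
  have hval' : (idRep.prod δD).map (K.toFun s) ∈ idProd T ((idRep.prod δC).map r₀) := by
    have : (K.comp ((PFunB.mk Dom (Function.update base (H.toFun r₀) s)).comp H)).toFun r₀
        = K.toFun s := by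
      show K.toFun ((PFunB.mk Dom (Function.update base (H.toFun r₀) s)).toFun (H.toFun r₀))
          = K.toFun s
      rw [hGs]
    rwa [this] at hval
  exact ⟨hKin, hcod'.2, hval'.1, hval'.2⟩

/-- If `T :⊆ X ⇉ Y` and `S :⊆ Y ⇉ Z` are cylinders and `T` is transparent, then
`S ∘ T` is a cylinder. -/
theorem comp_cylinder {X Y Z : Type*}
    (δX : RepSpace X) (δY : RepSpace Y) (δZ : RepSpace Z)
    (T : X → Set Y) (S : Y → Set Z)
    (hT : IsCylinder δX δY T) (hS : IsCylinder δY δZ S)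
    (htr : Transparent δX δY T) :
    IsCylinder δX δZ (MComp S T) := by
  classical
  obtain ⟨KT, HT, hKTc, hHTc, hTw⟩ := hT
  obtain ⟨KS, HS, hKSc, hHSc, hSw⟩ := hS
  have hΦc : (HS.comp KT).IsContinuous := PFunB.comp_isContinuous hHSc hKTc
  set Φ : PFunB := HS.comp KT with hΦdef
  set g : Y → Set Y := fun y₁ =>
    {y₂ | (∀ s, s ∈ δY.dom → δY.map s = y₁ → s ∈ Φ.dom ∧ Φ.toFun s ∈ δY.dom) ∧
      ∃ s, s ∈ δY.dom ∧ δY.map s = y₁ ∧ δY.map (Φ.toFun s) = y₂} with hgdef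
  have hgc : MCts δY δY g := by
    refine ⟨Φ, hΦc, ?_⟩
    intro s hs hne
    obtain ⟨y₂, hall, -⟩ := hne
    exact ⟨(hall s hs rfl).1, (hall s hs rfl).2, hall, s, hs, rfl, rfl⟩
  obtain ⟨f, hfc, htight⟩ := htr g hgc
  obtain ⟨F, hFc, hFreal⟩ := hfc
  refine ⟨KS, F.comp HT, hKSc, PFunB.comp_isContinuous hFc hHTc, ?_⟩
  intro G hG r₀ hr₀ hne₀
  obtain ⟨z₀, hz₀⟩ := hne₀
  obtain ⟨hSne, y₀, hy₀, -⟩ := hz₀.2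
  obtain ⟨hHTd, hr₁d, hTx₁ne, hdecT⟩ :=
    cylinder_extract δX δY T HT KT hTw r₀ hr₀.2 ⟨y₀, hy₀⟩
  -- main decoding property along names of points of `T x₁`
  have key : ∀ s, s ∈ δY.dom → δY.map s ∈ T (δX.map (HT.toFun r₀)) →
      (s ∈ Φ.dom ∧ Φ.toFun s ∈ δY.dom) ∧ (S (δY.map (Φ.toFun s))).Nonempty ∧
      ∀ s', s' ∈ δZ.dom → δZ.map s' ∈ S (δY.map (Φ.toFun s)) →
        s' ∈ KS.dom ∧ rightB (KS.toFun s') ∈ δZ.dom ∧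
        leftB (KS.toFun s') = leftB r₀ ∧
        δZ.map (rightB (KS.toFun s')) ∈ MComp S T (δX.map (rightB r₀)) := by
    intro s hs hsT
    obtain ⟨hsKT, htd, hlB, hyT⟩ := hdecT s hs hsT
    obtain ⟨huHS, hr₂d, hSne₂, hdecS⟩ :=
      cylinder_extract δY δZ S HS KS hSw (KT.toFun s) htd (hSne _ hyT)
    refine ⟨⟨⟨hsKT, huHS⟩, hr₂d⟩, hSne₂, ?_⟩
    intro s' h1 h2
    obtain ⟨h3, h4, h5, h6⟩ := hdecS s' h1 h2
    exact ⟨h3, h4, h5.trans hlB, hSne, δY.map (rightB (KT.toFun s)), hyT, h6⟩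
  have hgne : ∀ y₁ ∈ T (δX.map (HT.toFun r₀)), (g y₁).Nonempty := by
    intro y₁ hy₁
    obtain ⟨s, hs, hsm⟩ := δY.surj y₁
    refine ⟨δY.map (Φ.toFun s), ?_, s, hs, hsm, rfl⟩
    intro s' hs' hm'
    exact (key s' hs' (by rw [hm']; exact hy₁)).1
  have hgTne : (MComp g T (δX.map (HT.toFun r₀))).Nonempty := by
    obtain ⟨y₁, hy₁⟩ := hTx₁ne
    obtain ⟨y₂, hy₂⟩ := hgne y₁ hy₁
    exact ⟨y₂, hgne, y₁, hy₁, hy₂⟩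
  obtain ⟨hTfne, hTfsub⟩ := htight (δX.map (HT.toFun r₀)) hgTne
  obtain ⟨ystar, hallT, x₀', hx₀', -⟩ := hTfne
  obtain ⟨hr₁F, hFr₁d, hx'f⟩ := hFreal (HT.toFun r₀) hr₁d ⟨x₀', hx₀'⟩
  -- every element of `T x'` supports the final decoding
  have hy'prop : ∀ y' ∈ T (δX.map (F.toFun (HT.toFun r₀))),
      (S y').Nonempty ∧ ∀ s', s' ∈ δZ.dom → δZ.map s' ∈ S y' →
        s' ∈ KS.dom ∧ rightB (KS.toFun s') ∈ δZ.dom ∧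
        leftB (KS.toFun s') = leftB r₀ ∧
        δZ.map (rightB (KS.toFun s')) ∈ MComp S T (δX.map (rightB r₀)) := by
    intro y' hy'
    have h1 : y' ∈ MComp T f (δX.map (HT.toFun r₀)) := ⟨hallT, _, hx'f, hy'⟩
    obtain ⟨-, y₁, hy₁, hy'g⟩ := hTfsub h1
    obtain ⟨-, s, hs, hsm, hsΦ⟩ := hy'g
    have hk := key s hs (by rw [hsm]; exact hy₁)
    rw [← hsΦ]
    exact ⟨hk.2.1, hk.2.2⟩
  have hSTne : (MComp S T (δX.map (F.toFun (HT.toFun r₀)))).Nonempty := by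
    obtain ⟨y'', hy''⟩ := hallT _ hx'f
    obtain ⟨z'', hz''⟩ := (hy'prop y'' hy'').1
    exact ⟨z'', fun y' hy' => (hy'prop y' hy').1, y'', hy'', hz''⟩
  obtain ⟨hGd, hs'd, hz'⟩ := hG (F.toFun (HT.toFun r₀)) hFr₁d hSTne
  obtain ⟨-, y', hy', hz'S⟩ := hz'
  obtain ⟨h7, h8, h9, h10⟩ :=
    (hy'prop y' hy').2 (G.toFun (F.toFun (HT.toFun r₀))) hs'd hz'S
  exact ⟨⟨⟨⟨hHTd, hr₁F⟩, hGd⟩, h7⟩, ⟨trivial, h8⟩, h9, h10⟩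
end

section
/- Let T :⊆ X ⇉ Y and S :⊆ Y ⇉ Z be partial multivalued functions between represented spaces which are both cylinders, and suppose T is transparent. Then for all partial multivalued functions T' :⊆ A ⇉ B and S' :⊆ B ⇉ C between represented spaces with S' ≤_W^c S and T' ≤_W^c T, it holds that S' ∘ T' ≤_W^c S ∘ T. -/
open Filter Topology

/-! ### Auxiliary lemmas for `comp_maximal` -/

theorem continuous_leftB : Continuous leftB :=
  continuous_pi fun _ => continuous_apply _

theorem continuous_rightB : Continuous rightB :=
  continuous_pi fun _ => continuous_apply _

theorem continuous_pairB_uncurried :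
    Continuous (fun pq : (ℕ → ℕ) × (ℕ → ℕ) => pairB pq.1 pq.2) := by
  apply continuous_pi
  intro n
  show Continuous fun pq : (ℕ → ℕ) × (ℕ → ℕ) =>
    if n % 2 = 0 then pq.1 (n / 2) else pq.2 (n / 2)
  split_ifs
  · exact (continuous_apply _).comp continuous_fst
  · exact (continuous_apply _).comp continuous_snd

open Classical in
/-- A canonical name for an element of a nonempty subset of a represented space. -/
noncomputable def nameOf {Y : Type*} (δY : RepSpace Y) (s : Set Y) : ℕ → ℕ :=
  if h : s.Nonempty then Classical.choose (δY.surj h.choose) else fun _ => 0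

theorem nameOf_spec {Y : Type*} (δY : RepSpace Y) {s : Set Y} (h : s.Nonempty) :
    nameOf δY s ∈ δY.dom ∧ δY.map (nameOf δY s) ∈ s := by
  rw [nameOf, dif_pos h]
  obtain ⟨h1, h2⟩ := Classical.choose_spec (δY.surj h.choose)
  refine ⟨h1, ?_⟩
  rw [h2]
  exact h.choose_spec

/-- The default (choice-based) realizer, with domain exactly the "good" names. -/
noncomputable def defReal {X Y : Type*} (δX : RepSpace X) (δY : RepSpace Y)
    (f : X → Set Y) : PFunB :=
  ⟨{p | p ∈ δX.dom ∧ (f (δX.map p)).Nonempty}, fun p => nameOf δY (f (δX.map p))⟩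

theorem defReal_realizes {X Y : Type*} (δX : RepSpace X) (δY : RepSpace Y)
    (f : X → Set Y) : Realizes δX δY (defReal δX δY f) f := by
  intro p hp hf
  exact ⟨⟨hp, hf⟩, (nameOf_spec δY hf).1, (nameOf_spec δY hf).2⟩

open Classical in
/-- A realizer can be prescribed at a single point. -/
theorem realizer_with_value {X Y : Type*} (δX : RepSpace X) (δY : RepSpace Y)
    (f : X → Set Y) (p₀ r : ℕ → ℕ)
    (h : p₀ ∈ δX.dom → (f (δX.map p₀)).Nonempty →
      r ∈ δY.dom ∧ δY.map r ∈ f (δX.map p₀)) :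
    ∃ G : PFunB, Realizes δX δY G f ∧ G.toFun p₀ = r := by
  refine ⟨⟨insert p₀ {p | p ∈ δX.dom ∧ (f (δX.map p)).Nonempty},
    fun p => if p = p₀ then r else nameOf δY (f (δX.map p))⟩, ?_, by simp⟩
  intro p hp hf
  refine ⟨Set.mem_insert_iff.mpr (Or.inr ⟨hp, hf⟩), ?_⟩
  by_cases hpp : p = p₀
  · subst hpp
    simp only [if_pos rfl]
    exact h hp hf
  · simp only [if_neg hpp]
    exact ⟨(nameOf_spec δY hf).1, (nameOf_spec δY hf).2⟩

/-- From a strong reduction witness: `H` maps good names to good names. -/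
theorem domB_strong {A B X Y : Type*} (δA : RepSpace A) (δB : RepSpace B)
    (δX : RepSpace X) (δY : RepSpace Y) (f : A → Set B) (g : X → Set Y)
    (K H : PFunB)
    (hall : ∀ G : PFunB, Realizes δX δY G g → Realizes δA δB (K.comp (G.comp H)) f)
    {p : ℕ → ℕ} (hp : p ∈ δA.dom) (hf : (f (δA.map p)).Nonempty) :
    p ∈ H.dom ∧ H.toFun p ∈ δX.dom ∧ (g (δX.map (H.toFun p))).Nonempty := by
  obtain ⟨hdom, -, -⟩ := hall (defReal δX δY g) (defReal_realizes δX δY g) p hp hf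
  exact ⟨hdom.1.1, hdom.1.2.1, hdom.1.2.2⟩

/-- From a strong reduction witness: `K` maps any good intermediate name to a good
output name. -/
theorem fact_strong {A B X Y : Type*} (δA : RepSpace A) (δB : RepSpace B)
    (δX : RepSpace X) (δY : RepSpace Y) (f : A → Set B) (g : X → Set Y)
    (K H : PFunB)
    (hall : ∀ G : PFunB, Realizes δX δY G g → Realizes δA δB (K.comp (G.comp H)) f)
    {p : ℕ → ℕ} (hp : p ∈ δA.dom) (hf : (f (δA.map p)).Nonempty)
    {q : ℕ → ℕ} (hq : q ∈ δY.dom) (hq2 : δY.map q ∈ g (δX.map (H.toFun p))) :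
    q ∈ K.dom ∧ K.toFun q ∈ δB.dom ∧ δB.map (K.toFun q) ∈ f (δA.map p) := by
  obtain ⟨G, hGr, hGv⟩ := realizer_with_value δX δY g (H.toFun p) q
    (fun _ _ => ⟨hq, hq2⟩)
  obtain ⟨hdom, h1, h2⟩ := hall G hGr p hp hf
  have he : G.toFun (H.toFun p) = q := hGv
  refine ⟨?_, ?_, ?_⟩
  · have := hdom.2
    rwa [show (PFunB.comp G H).toFun p = q from he] at this
  · rwa [show (PFunB.comp K (PFunB.comp G H)).toFun p = K.toFun q by
      simp [PFunB.comp, he]] at h1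
  · rwa [show (PFunB.comp K (PFunB.comp G H)).toFun p = K.toFun q by
      simp [PFunB.comp, he]] at h2

/-- From a (non-strong) continuous-Weihrauch witness: `H` maps good names to good. -/
theorem domB_wc {A B X Y : Type*} (δA : RepSpace A) (δB : RepSpace B)
    (δX : RepSpace X) (δY : RepSpace Y) (f : A → Set B) (g : X → Set Y)
    (K : PFunB2) (H : PFunB)
    (hall : ∀ G : PFunB, Realizes δX δY G g →
      Realizes δA δB
        ⟨{p | p ∈ H.dom ∧ H.toFun p ∈ G.dom ∧ (p, G.toFun (H.toFun p)) ∈ K.dom},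
          fun p => K.toFun (p, G.toFun (H.toFun p))⟩ f)
    {p : ℕ → ℕ} (hp : p ∈ δA.dom) (hf : (f (δA.map p)).Nonempty) :
    p ∈ H.dom ∧ H.toFun p ∈ δX.dom ∧ (g (δX.map (H.toFun p))).Nonempty := by
  obtain ⟨hdom, -, -⟩ := hall (defReal δX δY g) (defReal_realizes δX δY g) p hp hf
  exact ⟨hdom.1, hdom.2.1.1, hdom.2.1.2⟩

theorem fact_wc {A B X Y : Type*} (δA : RepSpace A) (δB : RepSpace B)
    (δX : RepSpace X) (δY : RepSpace Y) (f : A → Set B) (g : X → Set Y)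
    (K : PFunB2) (H : PFunB)
    (hall : ∀ G : PFunB, Realizes δX δY G g →
      Realizes δA δB
        ⟨{p | p ∈ H.dom ∧ H.toFun p ∈ G.dom ∧ (p, G.toFun (H.toFun p)) ∈ K.dom},
          fun p => K.toFun (p, G.toFun (H.toFun p))⟩ f)
    {p : ℕ → ℕ} (hp : p ∈ δA.dom) (hf : (f (δA.map p)).Nonempty)
    {q : ℕ → ℕ} (hq : q ∈ δY.dom) (hq2 : δY.map q ∈ g (δX.map (H.toFun p))) :
    (p, q) ∈ K.dom ∧ K.toFun (p, q) ∈ δB.dom ∧ δB.map (K.toFun (p, q)) ∈ f (δA.map p) := by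
  obtain ⟨G, hGr, hGv⟩ := realizer_with_value δX δY g (H.toFun p) q
    (fun _ _ => ⟨hq, hq2⟩)
  obtain ⟨hdom, h1, h2⟩ := hall G hGr p hp hf
  simp only [Set.mem_setOf_eq] at hdom h1 h2
  rw [hGv] at hdom h1 h2
  exact ⟨hdom.2.2, h1, h2⟩

/-- For a cylinder, continuous Weihrauch reducibility implies strong continuous
Weihrauch reducibility. -/
theorem wc_to_strong {A B X Y : Type*} (δA : RepSpace A) (δB : RepSpace B)
    (δX : RepSpace X) (δY : RepSpace Y) (f : A → Set B) (g : X → Set Y)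
    (hcyl : IsCylinder δX δY g) (hw : Wc δA δB δX δY f g) :
    StrongWc δA δB δX δY f g := by
  obtain ⟨K₂, H, hKc, hHc, hall⟩ := hw
  obtain ⟨Kc, Hc, hKcc, hHcc, hcylall⟩ := hcyl
  refine ⟨⟨{r | r ∈ Kc.dom ∧ (leftB (Kc.toFun r), rightB (Kc.toFun r)) ∈ K₂.dom},
      fun r => K₂.toFun (leftB (Kc.toFun r), rightB (Kc.toFun r))⟩,
    ⟨{p | p ∈ H.dom ∧ pairB p (H.toFun p) ∈ Hc.dom},
      fun p => Hc.toFun (pairB p (H.toFun p))⟩, ?_, ?_, ?_⟩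
  · exact hKc.comp
      (ContinuousOn.prodMk
        (continuous_leftB.comp_continuousOn (hKcc.mono fun r hr => hr.1))
        (continuous_rightB.comp_continuousOn (hKcc.mono fun r hr => hr.1)))
      fun r hr => hr.2
  · exact hHcc.comp
      ((continuous_pairB_uncurried.comp_continuousOn
        (continuousOn_id.prodMk (hHc.mono fun p hp => hp.1)))) fun p hp => hp.2
  · intro G hG p hp hf
    obtain ⟨hpH, hHx, hgne⟩ := domB_wc δA δB δX δY f g K₂ H hall hp hf
    have hpair : pairB p (H.toFun p) ∈ (idRep.prod δX).dom := by
      refine ⟨trivial, ?_⟩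
      rw [rightB_pairB]
      exact hHx
    have hprodne :
        (idProd g ((idRep.prod δX).map (pairB p (H.toFun p)))).Nonempty := by
      obtain ⟨y, hy⟩ := hgne
      refine ⟨(leftB (pairB p (H.toFun p)), y), rfl, ?_⟩
      show y ∈ g (δX.map (rightB (pairB p (H.toFun p))))
      rw [rightB_pairB]
      exact hy
    obtain ⟨hcdom, hwdom, hwmem⟩ := hcylall G hG (pairB p (H.toFun p)) hpair hprodne
    -- notation
    set w := Kc.toFun (G.toFun (Hc.toFun (pairB p (H.toFun p)))) with hwdef
    have hleftw : leftB w = p := by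
      have := hwmem.1
      simp [RepSpace.prod, idRep, leftB_pairB] at this
      exact this
    have hrightw : rightB w ∈ δY.dom := hwdom.2
    have hrmem : δY.map (rightB w) ∈ g (δX.map (H.toFun p)) := by
      have := hwmem.2
      simp [RepSpace.prod, idRep, rightB_pairB] at this
      exact this
    obtain ⟨hKdom2, hKout, hKmem⟩ :=
      fact_wc δA δB δX δY f g K₂ H hall hp hf hrightw hrmem
    refine ⟨⟨⟨⟨hpH, hcdom.1.1⟩, hcdom.1.2⟩, ⟨hcdom.2, ?_⟩⟩, ?_, ?_⟩
    · show (leftB w, rightB w) ∈ K₂.dom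
      rw [hleftw]
      exact hKdom2
    · show K₂.toFun (leftB w, rightB w) ∈ δB.dom
      rw [hleftw]
      exact hKout
    · show δB.map (K₂.toFun (leftB w, rightB w)) ∈ f (δA.map p)
      rw [hleftw]
      exact hKmem

/-- The multivalued function on `Y` induced by a partial name-function `Φ`, with the
composition domain convention. -/
def transG {Y : Type*} (δY : RepSpace Y) (Φ : PFunB) : Y → Set Y :=
  fun y => {y' | (∀ q, q ∈ δY.dom → δY.map q = y →
      q ∈ Φ.dom ∧ Φ.toFun q ∈ δY.dom) ∧
    ∃ q, q ∈ δY.dom ∧ δY.map q = y ∧ δY.map (Φ.toFun q) = y'}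

theorem transG_realizes {Y : Type*} (δY : RepSpace Y) (Φ : PFunB) :
    Realizes δY δY Φ (transG δY Φ) := by
  intro q hq hne
  obtain ⟨y', hall, -⟩ := hne
  obtain ⟨hdom, hmem⟩ := hall q hq rfl
  exact ⟨hdom, hmem, ⟨hall, q, hq, rfl, rfl⟩⟩

/-- If `T :⊆ X ⇉ Y` and `S :⊆ Y ⇉ Z` are cylinders and `T` is transparent, then for all
`T' :⊆ A ⇉ B` and `S' :⊆ B ⇉ C` with `S' ≤_W^c S` and `T' ≤_W^c T` we have
`S' ∘ T' ≤_W^c S ∘ T`. -/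
theorem comp_maximal {X Y Z : Type*}
    (δX : RepSpace X) (δY : RepSpace Y) (δZ : RepSpace Z)
    (T : X → Set Y) (S : Y → Set Z)
    (hT : IsCylinder δX δY T) (hS : IsCylinder δY δZ S)
    (htr : Transparent δX δY T)
    {A B C : Type*} (δA : RepSpace A) (δB : RepSpace B) (δC : RepSpace C)
    (T' : A → Set B) (S' : B → Set C)
    (hS' : Wc δB δC δY δZ S' S) (hT' : Wc δA δB δX δY T' T) :
    Wc δA δC δX δZ (MComp S' T') (MComp S T) := by
  -- Upgrade both reductions to strong reductions using the cylinder assumptions.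
  obtain ⟨K₂, H₂, hK₂c, hH₂c, hS'all⟩ := wc_to_strong δB δC δY δZ S' S hS hS'
  obtain ⟨K₁, H₁, hK₁c, hH₁c, hT'all⟩ := wc_to_strong δA δB δX δY T' T hT hT'
  -- The connecting partial name-function Φ = H₂ ∘ K₁ and induced g : Y ⇉ Y.
  have hΦc : PFunB.IsContinuous
      ⟨{q | q ∈ K₁.dom ∧ K₁.toFun q ∈ H₂.dom}, fun q => H₂.toFun (K₁.toFun q)⟩ :=
    hH₂c.comp (hK₁c.mono fun q hq => hq.1) fun q hq => hq.2
  obtain ⟨f, ⟨F, hFc, hFreal⟩, htight⟩ := htr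
    (transG δY ⟨{q | q ∈ K₁.dom ∧ K₁.toFun q ∈ H₂.dom},
      fun q => H₂.toFun (K₁.toFun q)⟩)
    ⟨_, hΦc, transG_realizes δY _⟩
  refine ⟨⟨{pr | pr.2 ∈ K₂.dom}, fun pr => K₂.toFun pr.2⟩,
    ⟨{p | p ∈ H₁.dom ∧ H₁.toFun p ∈ F.dom}, fun p => F.toFun (H₁.toFun p)⟩,
    hK₂c.comp continuous_snd.continuousOn (fun pr hpr => hpr),
    hFc.comp (hH₁c.mono fun p hp => hp.1) (fun p hp => hp.2), ?_⟩
  intro G hG p hp hne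
  obtain ⟨c₀, hb, b₀, hb₀, -⟩ := hne
  have hT'ne : (T' (δA.map p)).Nonempty := ⟨b₀, hb₀⟩
  obtain ⟨hpH₁, hx'dom, hTx⟩ := domB_strong δA δB δX δY T' T K₁ H₁ hT'all hp hT'ne
  -- Key fact: every name of an element of T(δX (H₁ p)) is mapped well by K₁ and H₂.
  have hgood : ∀ q, q ∈ δY.dom → δY.map q ∈ T (δX.map (H₁.toFun p)) →
      (q ∈ K₁.dom ∧ K₁.toFun q ∈ H₂.dom) ∧
      H₂.toFun (K₁.toFun q) ∈ δY.dom ∧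
      (S (δY.map (H₂.toFun (K₁.toFun q)))).Nonempty ∧
      ∃ b ∈ T' (δA.map p), ∀ s, s ∈ δZ.dom →
        δZ.map s ∈ S (δY.map (H₂.toFun (K₁.toFun q))) →
        s ∈ K₂.dom ∧ K₂.toFun s ∈ δC.dom ∧ δC.map (K₂.toFun s) ∈ S' b := by
    intro q hq hq2
    obtain ⟨hqK, hrB, hbT⟩ := fact_strong δA δB δX δY T' T K₁ H₁ hT'all hp hT'ne hq hq2
    have hS'ne : (S' (δB.map (K₁.toFun q))).Nonempty := hb _ hbT
    obtain ⟨hrH₂, hΦq, hSne⟩ := domB_strong δB δC δY δZ S' S K₂ H₂ hS'all hrB hS'ne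
    exact ⟨⟨hqK, hrH₂⟩, hΦq, hSne, δB.map (K₁.toFun q), hbT,
      fun s hs hs2 => fact_strong δB δC δY δZ S' S K₂ H₂ hS'all hrB hS'ne hs hs2⟩
  -- g ∘ T has nonempty value at x = δX (H₁ p); apply the tightening.
  have hgT : (MComp (transG δY ⟨{q | q ∈ K₁.dom ∧ K₁.toFun q ∈ H₂.dom},
      fun q => H₂.toFun (K₁.toFun q)⟩) T (δX.map (H₁.toFun p))).Nonempty := by
    have hgy : ∀ y ∈ T (δX.map (H₁.toFun p)),
        (transG δY ⟨{q | q ∈ K₁.dom ∧ K₁.toFun q ∈ H₂.dom},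
          fun q => H₂.toFun (K₁.toFun q)⟩ y).Nonempty := by
      intro y hy
      obtain ⟨qy, hqy, hqmap⟩ := δY.surj y
      refine ⟨δY.map (H₂.toFun (K₁.toFun qy)), ?_, qy, hqy, hqmap, rfl⟩
      intro q hq hqm
      obtain ⟨hd, hm, -, -⟩ := hgood q hq (by rw [hqm]; exact hy)
      exact ⟨hd, hm⟩
    obtain ⟨y₀, hy₀⟩ := hTx
    obtain ⟨y', hy'⟩ := hgy y₀ hy₀
    exact ⟨y', hgy, y₀, hy₀, hy'⟩
  obtain ⟨hTfne, hTfsub⟩ := htight (δX.map (H₁.toFun p)) hgT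
  have hTall : ∀ x₂ ∈ f (δX.map (H₁.toFun p)), (T x₂).Nonempty := by
    obtain ⟨y₂, h1, -⟩ := hTfne
    exact h1
  have hfne : (f (δX.map (H₁.toFun p))).Nonempty := by
    obtain ⟨y₂, -, x₂, hx₂, -⟩ := hTfne
    exact ⟨x₂, hx₂⟩
  obtain ⟨hx'F, hx''dom, hx₁f⟩ := hFreal (H₁.toFun p) hx'dom hfne
  -- every y₁ ∈ T(δX (F (H₁ p))) is of the form δY (H₂ (K₁ q)) for a good q.
  have hSy : ∀ y₁ ∈ T (δX.map (F.toFun (H₁.toFun p))), (S y₁).Nonempty ∧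
      ∃ b ∈ T' (δA.map p), ∀ s, s ∈ δZ.dom → δZ.map s ∈ S y₁ →
        s ∈ K₂.dom ∧ K₂.toFun s ∈ δC.dom ∧ δC.map (K₂.toFun s) ∈ S' b := by
    intro y₁ h1
    have hmem : y₁ ∈ MComp (transG δY ⟨{q | q ∈ K₁.dom ∧ K₁.toFun q ∈ H₂.dom},
        fun q => H₂.toFun (K₁.toFun q)⟩) T (δX.map (H₁.toFun p)) :=
      hTfsub ⟨hTall, δX.map (F.toFun (H₁.toFun p)), hx₁f, h1⟩
    obtain ⟨-, y, hyT, hy₁g⟩ := hmem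
    obtain ⟨-, q, hq, hqy, hmapeq⟩ := hy₁g
    obtain ⟨-, -, hSne, hfact3⟩ := hgood q hq (by rw [hqy]; exact hyT)
    rw [hmapeq] at hSne hfact3
    exact ⟨hSne, hfact3⟩
  have hSTne : (MComp S T (δX.map (F.toFun (H₁.toFun p)))).Nonempty := by
    obtain ⟨y₁, hy₁⟩ := hTall (δX.map (F.toFun (H₁.toFun p))) hx₁f
    obtain ⟨z, hz⟩ := (hSy y₁ hy₁).1
    exact ⟨z, fun y₁' h => (hSy y₁' h).1, y₁, hy₁, hz⟩
  obtain ⟨hx''G, hsdom, hzmem⟩ := hG (F.toFun (H₁.toFun p)) hx''dom hSTne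
  obtain ⟨-, y₁, hy₁T, hzS⟩ := hzmem
  obtain ⟨-, b, hbT', hfact3⟩ := hSy y₁ hy₁T
  obtain ⟨hsK₂, hKsdom, hKsmem⟩ := hfact3 _ hsdom hzS
  exact ⟨⟨⟨hpH₁, hx'F⟩, hx''G, hsK₂⟩, hKsdom, hb, b, hbT', hKsmem⟩
end
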